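/- Let T : V → g be an O-operator on a Lie algebra g with respect to a representation (V;ρ). Then the map ρ̄ : V → gl(g) defined by ρ̄(u)(x) := [Tu, x] + T(ρ(x)u) is a representation of the Lie algebra (V, [·,·]_T) on g, where [u,v]_T = ρ(Tu)v − ρ(Tv)u. -/

import Mathlib

attribute [local instance 100] LieRing.ofAssociativeRing

/-- Given an O-operator `T`, the map `ρ̄(u)x := [Tu,x] + T(ρ(x)u)` is a
representation of the Lie algebra `(V,[·,·]_T)` on `g`. -/
theorem stmt2 {K : Type*} [Field K]
    {g : Type*} [LieRing g] [LieAlgebra K g]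
    {V : Type*} [AddCommGroup V] [Module K V]
    (ρ : g →ₗ⁅K⁆ Module.End K V) (T : V →ₗ[K] g)
    (hT : ∀ u v : V, ⁅T u, T v⁆ = T (ρ (T u) v - ρ (T v) u)) :
    ∀ u v : V, ∀ x : g,
      (⁅T (ρ (T u) v - ρ (T v) u), x⁆ + T (ρ x (ρ (T u) v - ρ (T v) u)))
        = (⁅T u, ⁅T v, x⁆ + T (ρ x v)⁆ + T (ρ (⁅T v, x⁆ + T (ρ x v)) u))
          - (⁅T v, ⁅T u, x⁆ + T (ρ x u)⁆ + T (ρ (⁅T u, x⁆ + T (ρ x u)) v)) := by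
  intro u v x
  have hρ : ∀ y z : g, ∀ w : V, ρ ⁅y, z⁆ w = ρ y (ρ z w) - ρ z (ρ y w) := by
    intro y z w
    rw [ρ.map_lie]
    simp [Ring.lie_def, LinearMap.sub_apply, Module.End.mul_apply]
  rw [← hT u v, lie_lie]
  simp only [lie_add, ρ.map_add, LinearMap.add_apply, hT, hρ, map_sub, map_add]
  abel
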